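/- Let G = (V, E) be any graph on a finite point set X ⊂ R^d (Euclidean metric, points in general position) that contains the Delaunay graph of X as a subgraph. Then greedy best-first search for a query q — starting at any node and repeatedly moving to the neighbor closest to q until no neighbor is closer — terminates at the exact nearest neighbor of q in X. -/
import Mathlib


/-- Greedy best-first search on any graph containing the Delaunay graph of a
finite point set in general position terminates at the exact nearest neighbor:
any node `u ∈ X` at which greedy search stops (no neighbor of `u` is closer to
the query `q` than `u`) is a nearest neighbor of `q` in `X`. -/
theorem stmt14
    (d : ℕ) (X : Finset (EuclideanSpace ℝ (Fin d)))
    -- general position, part 1: no k points (2 ≤ k ≤ d+1) lie on a (k-2)-flat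
    (hGP₁ : ∀ S : Finset (EuclideanSpace ℝ (Fin d)), S ⊆ X →
        2 ≤ S.card → S.card ≤ d + 1 →
        ∀ A : AffineSubspace ℝ (EuclideanSpace ℝ (Fin d)),
          Module.finrank ℝ A.direction = S.card - 2 →
          ¬ (↑S : Set (EuclideanSpace ℝ (Fin d))) ⊆ (A : Set (EuclideanSpace ℝ (Fin d))))
    -- general position, part 2: no k+1 points lie on a (k-2)-dimensional sphere
    (hGP₂ : ∀ S : Finset (EuclideanSpace ℝ (Fin d)), S ⊆ X →
        3 ≤ S.card → S.card ≤ d + 2 →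
        ∀ (A : AffineSubspace ℝ (EuclideanSpace ℝ (Fin d)))
          (c : EuclideanSpace ℝ (Fin d)) (ρ : ℝ),
          Module.finrank ℝ A.direction = S.card - 2 →
          ¬ (↑S : Set (EuclideanSpace ℝ (Fin d))) ⊆
              ((A : Set (EuclideanSpace ℝ (Fin d))) ∩ Metric.sphere c ρ))
    (Adj : EuclideanSpace ℝ (Fin d) → EuclideanSpace ℝ (Fin d) → Prop)
    -- G contains the Delaunay graph: every Delaunay edge is an edge of G
    (hDel : ∀ u ∈ X, ∀ v ∈ X, u ≠ v →
        ({x : EuclideanSpace ℝ (Fin d) | ∀ w ∈ X, dist x u ≤ dist x w} ∩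
          {x : EuclideanSpace ℝ (Fin d) | ∀ w ∈ X, dist x v ≤ dist x w}).Nonempty →
        Adj u v)
    (q : EuclideanSpace ℝ (Fin d))
    (u : EuclideanSpace ℝ (Fin d)) (hu : u ∈ X)
    -- u is a terminal node of greedy best-first search: no neighbor is closer to q
    (hlocal : ∀ v ∈ X, Adj u v → dist q u ≤ dist q v) :
    ∀ v ∈ X, dist q u ≤ dist q v := by
  classical
  intro v hv
  by_contra hcon
  push_neg at hcon
  have hD : 0 < dist q u := lt_of_le_of_lt dist_nonneg hcon
  -- parametrize the segment from u to q
  set p : ℝ → EuclideanSpace ℝ (Fin d) := fun t => u + t • (q - u) with hp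
  have hpc : Continuous p := continuous_const.add (continuous_id.smul continuous_const)
  have hp0 : p 0 = u := by simp [hp]
  have hp1 : p 1 = q := by simp [hp]
  set S : Set ℝ := {t | t ∈ Set.Icc (0:ℝ) 1 ∧ ∀ w ∈ X, dist (p t) u ≤ dist (p t) w} with hS
  have hS0 : (0:ℝ) ∈ S := by
    refine ⟨⟨le_refl 0, zero_le_one⟩, fun w hw => ?_⟩
    simp only [hp0, dist_self]
    exact dist_nonneg
  have hSsub : S ⊆ Set.Icc (0:ℝ) 1 := fun t ht => ht.1
  have hSclosed : IsClosed S := by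
    have : S = Set.Icc (0:ℝ) 1 ∩ ⋂ w ∈ X, {t | dist (p t) u ≤ dist (p t) w} := by
      ext t; simp [hS, Set.mem_iInter]
    rw [this]
    exact isClosed_Icc.inter (isClosed_biInter fun w _ =>
      isClosed_le ((hpc.dist continuous_const)) ((hpc.dist continuous_const)))
  have hScomp : IsCompact S := isCompact_Icc.of_isClosed_subset hSclosed hSsub
  set t₀ : ℝ := sSup S with ht₀
  have ht₀S : t₀ ∈ S := hScomp.sSup_mem ⟨0, hS0⟩
  have ht₀le1 : t₀ ≤ 1 := (hSsub ht₀S).2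
  have ht₀0 : 0 ≤ t₀ := (hSsub ht₀S).1
  have h1S : (1:ℝ) ∉ S := by
    intro h1
    exact absurd (h1.2 v hv) (by rw [hp1]; exact not_le.mpr hcon)
  have ht₀lt1 : t₀ < 1 := lt_of_le_of_ne ht₀le1 (fun h => h1S (h ▸ ht₀S))
  set x : EuclideanSpace ℝ (Fin d) := p t₀ with hx
  have hxu : ∀ w ∈ X, dist x u ≤ dist x w := ht₀S.2
  -- there is some other point w with dist x w ≤ dist x u
  have hex : ∃ w ∈ X, w ≠ u ∧ dist x w ≤ dist x u := by
    by_contra hne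
    push_neg at hne
    set U : Set ℝ := ⋂ w ∈ X.erase u, {t | dist (p t) u < dist (p t) w} with hU
    have hUopen : IsOpen U := isOpen_biInter_finset fun w _ =>
      isOpen_lt (hpc.dist continuous_const) (hpc.dist continuous_const)
    have ht₀U : t₀ ∈ U := by
      simp only [hU, Set.mem_iInter]
      intro w hw
      exact hne w (Finset.mem_of_mem_erase hw) (Finset.ne_of_mem_erase hw)
    obtain ⟨δ, hδ, hball⟩ := Metric.isOpen_iff.mp hUopen t₀ ht₀U
    set t' : ℝ := min 1 (t₀ + δ/2) with ht'
    have ht'gt : t₀ < t' := lt_min ht₀lt1 (by linarith)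
    have ht'le1 : t' ≤ 1 := min_le_left _ _
    have ht'ball : t' ∈ Metric.ball t₀ δ := by
      rw [Metric.mem_ball, Real.dist_eq, abs_lt]
      constructor
      · linarith
      · have : t' ≤ t₀ + δ/2 := min_le_right _ _
        linarith
    have ht'S : t' ∈ S := by
      refine ⟨⟨le_trans ht₀0 ht'gt.le, ht'le1⟩, fun w hw => ?_⟩
      rcases eq_or_ne w u with rfl | hwu
      · exact le_refl _
      · have := hball ht'ball
        simp only [hU, Set.mem_iInter] at this
        exact (this w (Finset.mem_erase.mpr ⟨hwu, hw⟩)).le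
    have : t' ≤ t₀ := le_csSup (hScomp.bddAbove) ht'S
    linarith
  obtain ⟨w, hwX, hwu, hwle⟩ := hex
  -- x lies in the Voronoi cells of both u and w
  have hxw : ∀ w' ∈ X, dist x w ≤ dist x w' := fun w' hw' =>
    le_trans hwle (hxu w' hw')
  have hadj : Adj u w := hDel u hu w hwX (Ne.symm hwu) ⟨x, hxu, hxw⟩
  have hge : dist q u ≤ dist q w := hlocal w hwX hadj
  -- distances along the segment
  have hxmu : x - u = t₀ • (q - u) := by simp [hx, hp]
  have hqmx : q - x = (1 - t₀) • (q - u) := by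
    simp only [hx, hp]
    module
  have hdxu : dist x u = t₀ * dist q u := by
    rw [dist_eq_norm, dist_eq_norm, hxmu, norm_smul, Real.norm_eq_abs,
      abs_of_nonneg ht₀0]
  have hdqx : dist q x = (1 - t₀) * dist q u := by
    rw [dist_eq_norm, dist_eq_norm, hqmx, norm_smul,
      Real.norm_eq_abs, abs_of_nonneg (by linarith)]
  have hchain : dist q x + dist x w ≤ dist q u := by
    have := hxu w hwX
    calc dist q x + dist x w ≤ dist q x + dist x u := by linarith [hwle]
    _ = dist q u := by rw [hdqx, hdxu]; ring
  have hqw : dist q w = dist q u :=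
    le_antisymm (le_trans (dist_triangle q x w) hchain) hge
  have heq2 : dist q x + dist x w = dist q w :=
    le_antisymm (hqw ▸ hchain) (dist_triangle q x w)
  have hWbtw : Wbtw ℝ q x w := dist_add_dist_eq_iff.mp heq2
  obtain ⟨s, hs, hxs⟩ := hWbtw
  have hxq : x - q = s • (w - q) := by
    rw [← hxs, AffineMap.lineMap_apply_module]
    module
  have hxq' : x - q = (1 - t₀) • (u - q) := by
    rw [← neg_sub q x, hqmx]
    module
  have hnormuq : ‖u - q‖ = dist q u := by rw [dist_comm, dist_eq_norm]
  have hnormwq : ‖w - q‖ = dist q u := by rw [← hqw, dist_comm, dist_eq_norm]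
  have hseq : s = 1 - t₀ := by
    have h1 : ‖x - q‖ = s * dist q u := by
      rw [hxq, norm_smul, Real.norm_eq_abs, abs_of_nonneg hs.1, hnormwq]
    have h2 : ‖x - q‖ = (1 - t₀) * dist q u := by
      rw [hxq', norm_smul, Real.norm_eq_abs, abs_of_nonneg (by linarith), hnormuq]
    have := h1.symm.trans h2
    exact mul_right_cancel₀ (ne_of_gt hD) this
  have hwu' : w = u := by
    have h3 : (1 - t₀) • (w - q) = (1 - t₀) • (u - q) := by
      rw [← hseq, ← hxq, hxq', hseq]
    have h4 : w - q = u - q := smul_right_injective _ (by linarith : (0:ℝ) < 1 - t₀).ne' h3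
    have := sub_left_injective h4
    exact this
  exact hwu hwu'
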